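/- Let 𝔊₂ be the 7-dimensional real Lie algebra with basis (X₁,X₂,X₃,X₄,X₅,X,Y) and nonzero brackets [X₁,X₂]=X₄, [X₁,X₃]=X₅, [X,X₁]=X₁, [X,X₄]=X₄, [X,X₅]=X₅, [Y,X₃]=X₃, [Y,X₅]=X₅. Let F ∈ 𝔊₂* have coordinates (α₁,α₂,α₃,α₄,α₅,α,β) with α₃α₄ ≠ 0 and α₅ = 0. Then Ω_F(𝔊₂) = { (x₁*,x₂*,x₃*,x₄*,x₅*,x*,y*) ∈ 𝔊₂* : x₅* = 0, α₃x₃* > 0, α₄x₄* > 0 } (here x₁*, x₂*, x*, y* range over all of ℝ). -/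

import Mathlib

noncomputable section

/-- Half of the structure constants of the Lie algebra 𝔊₂ (indices `0,…,4` are
`X₁,…,X₅`, index `5` is `X`, index `6` is `Y`). -/
def g2half (i j : Fin 7) : Fin 7 → ℝ :=
  if i = 0 ∧ j = 1 then Pi.single 3 1      -- [X₁,X₂] = X₄
  else if i = 0 ∧ j = 2 then Pi.single 4 1 -- [X₁,X₃] = X₅
  else if i = 5 ∧ j = 0 then Pi.single 0 1 -- [X,X₁] = X₁
  else if i = 5 ∧ j = 3 then Pi.single 3 1 -- [X,X₄] = X₄
  else if i = 5 ∧ j = 4 then Pi.single 4 1 -- [X,X₅] = X₅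
  else if i = 6 ∧ j = 2 then Pi.single 2 1 -- [Y,X₃] = X₃
  else if i = 6 ∧ j = 4 then Pi.single 4 1 -- [Y,X₅] = X₅
  else 0

/-- The bracket `[Xᵢ, Xⱼ]` (in coordinates) of basis vectors of 𝔊₂. -/
def g2br (i j : Fin 7) : Fin 7 → ℝ := g2half i j - g2half j i

/-- The matrix (in the given basis) of the adjoint endomorphism `ad_U : T ↦ [U,T]`
of 𝔊₂, where `u` is the coordinate vector of `U`. -/
def adG2 (u : Fin 7 → ℝ) : Matrix (Fin 7) (Fin 7) ℝ :=
  Matrix.of fun k j => ∑ i, u i * g2br i j k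

/-- `Ω_F(𝔊₂) = {F_U : U ∈ 𝔊₂}` where `⟨F_U,T⟩ = ⟨F, exp(ad_U)(T)⟩`; in coordinates
(dual basis), `F_U = α ᵥ* exp(ad_U)` where `α` is the coordinate vector of `F`. -/
def OmegaG2 (α : Fin 7 → ℝ) : Set (Fin 7 → ℝ) :=
  {g | ∃ u : Fin 7 → ℝ, g = Matrix.vecMul α (NormedSpace.exp (adG2 u))}

namespace G2Aux

open Matrix in
@[simp] theorem cons_val_five' {β : Type*} {m : ℕ} (x : β) (u : Fin (m + 5) → β) :
    vecCons x u 5 = vecHead (vecTail (vecTail (vecTail (vecTail u)))) := rfl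

open Matrix in
@[simp] theorem cons_val_six' {β : Type*} {m : ℕ} (x : β) (u : Fin (m + 6) → β) :
    vecCons x u 6 = vecHead (vecTail (vecTail (vecTail (vecTail (vecTail u))))) := rfl

/-- Explicit form of the `ad` matrix. -/
def Mm (u : Fin 7 → ℝ) : Matrix (Fin 7) (Fin 7) ℝ :=
  Matrix.of ![
    ![u 5, 0, 0, 0, 0, -u 0, 0],
    ![0, 0, 0, 0, 0, 0, 0],
    ![0, 0, u 6, 0, 0, 0, -u 2],
    ![-u 1, u 0, 0, u 5, 0, -u 3, 0],
    ![-u 2, 0, u 0, 0, u 5 + u 6, -u 4, -u 4],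
    ![0, 0, 0, 0, 0, 0, 0],
    ![0, 0, 0, 0, 0, 0, 0]]

/-- `Mm` with the 4th row zeroed out. -/
def M0 (u : Fin 7 → ℝ) : Matrix (Fin 7) (Fin 7) ℝ :=
  Matrix.of ![
    ![u 5, 0, 0, 0, 0, -u 0, 0],
    ![0, 0, 0, 0, 0, 0, 0],
    ![0, 0, u 6, 0, 0, 0, -u 2],
    ![-u 1, u 0, 0, u 5, 0, -u 3, 0],
    ![0, 0, 0, 0, 0, 0, 0],
    ![0, 0, 0, 0, 0, 0, 0],
    ![0, 0, 0, 0, 0, 0, 0]]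

set_option maxHeartbeats 2000000 in
theorem adG2_eq (u : Fin 7 → ℝ) : adG2 u = Mm u := by
  ext k j
  fin_cases k <;> fin_cases j <;>
    simp (config := { decide := true }) [adG2, Mm, g2br, g2half, Fin.sum_univ_seven,
      Pi.single_apply, Matrix.vecHead, Matrix.vecTail]

theorem vecMul_Mm_eq (u β : Fin 7 → ℝ) (hβ : β 4 = 0) :
    Matrix.vecMul β (Mm u) = Matrix.vecMul β (M0 u) := by
  funext j
  fin_cases j <;>
    simp [Matrix.vecMul, M0, Mm, dotProduct, Fin.sum_univ_seven,
      Matrix.vecHead, Matrix.vecTail, hβ]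

/-- coordinates of `α ·ᵥ M0 ^ (n+1)`. -/
def Vv (α u : Fin 7 → ℝ) (n : ℕ) : Fin 7 → ℝ :=
  ![α 0 * u 5 ^ (n+1) - α 3 * u 1 * (((n:ℝ)+1) * u 5 ^ n),
    α 3 * u 0 * u 5 ^ n,
    α 2 * u 6 ^ (n+1),
    α 3 * u 5 ^ (n+1),
    0,
    -(α 0 * u 0 + α 3 * u 3) * u 5 ^ n + α 3 * u 0 * u 1 * ((n:ℝ) * u 5 ^ (n-1)),
    -(α 2 * u 2) * u 6 ^ n]

@[simp] theorem Vv_four (α u : Fin 7 → ℝ) (n : ℕ) : Vv α u n 4 = 0 := rfl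

theorem vecMul_M0_pow (α u : Fin 7 → ℝ) :
    ∀ n : ℕ, Matrix.vecMul α ((M0 u) ^ (n+1)) = Vv α u n := by
  intro n
  induction n with
  | zero =>
    funext j
    fin_cases j <;>
      simp [Matrix.vecMul, M0, Vv, dotProduct, Fin.sum_univ_seven,
        Matrix.vecHead, Matrix.vecTail] <;> ring
  | succ n ih =>
    have h : (M0 u) ^ (n+1+1) = (M0 u) ^ (n+1) * M0 u := pow_succ _ _
    rw [h, ← Matrix.vecMul_vecMul, ih]
    funext j
    fin_cases j <;>
      simp [Matrix.vecMul, M0, Vv, dotProduct, Fin.sum_univ_seven,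
        Matrix.vecHead, Matrix.vecTail, pow_succ] <;>
      push_cast <;> ring_nf

theorem vecMul_Mm_pow (α u : Fin 7 → ℝ) (h5 : α 4 = 0) :
    ∀ n : ℕ, Matrix.vecMul α ((Mm u) ^ (n+1)) = Vv α u n := by
  intro n
  induction n with
  | zero =>
    rw [pow_one, vecMul_Mm_eq u α h5, ← pow_one (M0 u)]
    exact vecMul_M0_pow α u 0
  | succ n ih =>
    have h : (Mm u) ^ (n+1+1) = (Mm u) ^ (n+1) * Mm u := pow_succ _ _
    rw [h, ← Matrix.vecMul_vecMul, ih, vecMul_Mm_eq u _ (Vv_four α u n),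
      ← vecMul_M0_pow α u n, Matrix.vecMul_vecMul, ← pow_succ]
    exact vecMul_M0_pow α u (n+1)

/-! scalar series -/

def phi (x : ℝ) : ℝ := ∑' n : ℕ, x ^ n / (n+1).factorial

def psi (x : ℝ) : ℝ := ∑' n : ℕ, (n : ℝ) * x ^ (n-1) / (n+1).factorial

theorem hs_exp (x : ℝ) : HasSum (fun n : ℕ => x ^ n / n.factorial) (Real.exp x) := by
  rw [Real.exp_eq_exp_ℝ]; exact NormedSpace.expSeries_div_hasSum_exp x

theorem hs_exp1 (x : ℝ) :
    HasSum (fun n : ℕ => x ^ (n+1) / (n+1).factorial) (Real.exp x - 1) := by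
  have := (hasSum_nat_add_iff' 1).mpr (hs_exp x)
  simpa using this

theorem summable_phi (x : ℝ) : Summable (fun n : ℕ => x ^ n / (n+1).factorial) := by
  refine Summable.of_abs (((Real.summable_pow_div_factorial |x|).of_nonneg_of_le
    (fun n => abs_nonneg _) (fun n => ?_)))
  rw [abs_div, abs_pow, Nat.abs_cast]
  apply div_le_div₀ (by positivity) le_rfl (by positivity)
  exact_mod_cast Nat.factorial_le (Nat.le_succ n)

theorem summable_psi (x : ℝ) :
    Summable (fun n : ℕ => (n : ℝ) * x ^ (n-1) / (n+1).factorial) := by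
  have h1 : Summable (fun n : ℕ => |x| ^ (n-1) / (n-1).factorial) := by
    apply (summable_nat_add_iff 1).mp
    simpa using Real.summable_pow_div_factorial |x|
  refine Summable.of_abs (h1.of_nonneg_of_le (fun n => abs_nonneg _) (fun n => ?_))
  rw [abs_div, abs_mul, abs_pow, Nat.abs_cast, Nat.abs_cast]
  rcases Nat.eq_zero_or_pos n with hn | hn
  · subst hn; simp
  · have hfac : (n : ℝ) * (n-1).factorial ≤ ((n+1).factorial : ℝ) := by
      have : n * (n-1).factorial ≤ (n+1).factorial := by
        rw [Nat.mul_factorial_pred hn.ne']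
        exact Nat.factorial_le (Nat.le_succ n)
      exact_mod_cast this
    have hn' : (0:ℝ) < n := Nat.cast_pos.mpr hn
    rw [div_le_div_iff₀ (by positivity) (by positivity)]
    calc (n:ℝ) * |x| ^ (n-1) * (n-1).factorial
        = |x| ^ (n-1) * ((n:ℝ) * (n-1).factorial) := by ring
      _ ≤ |x| ^ (n-1) * (n+1).factorial :=
          mul_le_mul_of_nonneg_left hfac (by positivity)

theorem hs_phi (x : ℝ) : HasSum (fun n : ℕ => x ^ n / (n+1).factorial) (phi x) :=
  (summable_phi x).hasSum

theorem hs_psi (x : ℝ) :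
    HasSum (fun n : ℕ => (n : ℝ) * x ^ (n-1) / (n+1).factorial) (psi x) :=
  (summable_psi x).hasSum

theorem phi_zero : phi 0 = 1 := by
  have : HasSum (fun n : ℕ => (0:ℝ) ^ n / (n+1).factorial) 1 := by
    have := hasSum_single (f := fun n : ℕ => (0:ℝ) ^ n / (n+1).factorial) 0
      (fun b hb => by simp [zero_pow hb])
    simpa using this
  exact (hs_phi 0).unique this

theorem mul_phi (x : ℝ) : x * phi x = Real.exp x - 1 := by
  have h1 : HasSum (fun n : ℕ => x * (x ^ n / (n+1).factorial)) (x * phi x) :=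
    (hs_phi x).mul_left x
  have h2 : (fun n : ℕ => x * (x ^ n / (n+1).factorial)) =
      fun n : ℕ => x ^ (n+1) / (n+1).factorial := by
    funext n; rw [pow_succ]; ring
  rw [h2] at h1
  exact h1.unique (hs_exp1 x)

theorem phi_ne_zero (x : ℝ) : phi x ≠ 0 := by
  rcases eq_or_ne x 0 with h | h
  · rw [h, phi_zero]; norm_num
  · intro hc
    have := mul_phi x
    rw [hc, mul_zero] at this
    have hx : Real.exp x = Real.exp 0 := by rw [Real.exp_zero]; linarith
    exact h (Real.exp_injective hx)


theorem hsC (x c : ℝ) :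
    HasSum (fun n : ℕ => c * x ^ (n+1) / (n+1).factorial) (c * (Real.exp x - 1)) := by
  have h := (hs_exp1 x).mul_left c
  simpa [mul_div_assoc] using h

theorem hsD (x c : ℝ) :
    HasSum (fun n : ℕ => c * x ^ n / (n+1).factorial) (c * phi x) := by
  have h := (hs_phi x).mul_left c
  simpa [mul_div_assoc] using h

theorem hsE (x c : ℝ) :
    HasSum (fun n : ℕ => c * ((n:ℝ) * x ^ (n-1)) / (n+1).factorial) (c * psi x) := by
  have h := (hs_psi x).mul_left c
  simpa [mul_div_assoc] using h

theorem hsB (x c : ℝ) :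
    HasSum (fun n : ℕ => c * (((n:ℝ)+1) * x ^ n) / (n+1).factorial) (c * Real.exp x) := by
  have h := (hs_exp x).mul_left c
  have he : (fun n : ℕ => c * (x ^ n / n.factorial)) =
      fun n : ℕ => c * (((n:ℝ)+1) * x ^ n) / (n+1).factorial := by
    funext n
    have hn : ((n:ℝ)+1) ≠ 0 := by positivity
    have hf : (n.factorial : ℝ) ≠ 0 := by exact_mod_cast n.factorial_ne_zero
    rw [Nat.factorial_succ]
    push_cast
    field_simp
  rw [he] at h
  exact h

/-- the coordinates of `F_U`. -/
def Gv (α u : Fin 7 → ℝ) : Fin 7 → ℝ :=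
  ![(α 0 - α 3 * u 1) * Real.exp (u 5),
    α 1 + α 3 * u 0 * phi (u 5),
    α 2 * Real.exp (u 6),
    α 3 * Real.exp (u 5),
    0,
    α 5 - (α 0 * u 0 + α 3 * u 3) * phi (u 5) + α 3 * u 0 * u 1 * psi (u 5),
    α 6 - α 2 * u 2 * phi (u 6)]

theorem key (α u : Fin 7 → ℝ) (h5 : α 4 = 0) :
    Matrix.vecMul α (NormedSpace.exp (adG2 u)) = Gv α u := by
  letI : SeminormedRing (Matrix (Fin 7) (Fin 7) ℝ) := Matrix.linftyOpSemiNormedRing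
  letI : NormedRing (Matrix (Fin 7) (Fin 7) ℝ) := Matrix.linftyOpNormedRing
  letI : NormedAlgebra ℝ (Matrix (Fin 7) (Fin 7) ℝ) := Matrix.linftyOpNormedAlgebra
  rw [adG2_eq]
  have hA : HasSum (fun n : ℕ => ((n.factorial : ℝ))⁻¹ • (Mm u) ^ n)
      (NormedSpace.exp (Mm u)) := NormedSpace.exp_series_hasSum_exp' (Mm u)
  set L : Matrix (Fin 7) (Fin 7) ℝ →ₗ[ℝ] (Fin 7 → ℝ) :=
    { toFun := fun A => Matrix.vecMul α A,
      map_add' := fun A B => Matrix.vecMul_add ..,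
      map_smul' := fun c A => by
        funext j
        simp only [Matrix.vecMul, dotProduct, RingHom.id_apply, Pi.smul_apply,
          smul_eq_mul, Matrix.smul_apply, Finset.mul_sum]
        exact Finset.sum_congr rfl fun i _ => by ring } with hLdef
  have h1 := (LinearMap.toContinuousLinearMap L).hasSum hA
  have h2 : HasSum (fun n : ℕ => ((n.factorial : ℝ))⁻¹ • Matrix.vecMul α ((Mm u) ^ n))
      (Matrix.vecMul α (NormedSpace.exp (Mm u))) := by
    simpa [hLdef, map_smul] using h1
  have h3 := (hasSum_nat_add_iff' 1).mpr h2
  have h4 : HasSum (fun n : ℕ => (((n+1).factorial : ℝ))⁻¹ • Vv α u n)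
      (Matrix.vecMul α (NormedSpace.exp (Mm u)) - α) := by
    simpa [vecMul_Mm_pow α u h5, Matrix.vecMul_one] using h3
  have hT : HasSum (fun n : ℕ => (((n+1).factorial : ℝ))⁻¹ • Vv α u n) (Gv α u - α) := by
    apply Pi.hasSum.mpr
    intro j
    fin_cases j
    · convert (hsC (u 5) (α 0)).sub (hsB (u 5) (α 3 * u 1)) using 1
      · rfl
      · funext n
        simp [Vv, Matrix.vecHead, Matrix.vecTail]
        try push_cast
        try ring
      · simp [Gv, h5, Matrix.vecHead, Matrix.vecTail]
        try ring
    · convert hsD (u 5) (α 3 * u 0) using 1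
      · funext n
        simp [Vv, Matrix.vecHead, Matrix.vecTail]
        try push_cast
        try ring
      · simp [Gv, h5, Matrix.vecHead, Matrix.vecTail]
        try ring
    · convert hsC (u 6) (α 2) using 1
      · funext n
        simp [Vv, Matrix.vecHead, Matrix.vecTail]
        try push_cast
        try ring
      · simp [Gv, h5, Matrix.vecHead, Matrix.vecTail]
        try ring
    · convert hsC (u 5) (α 3) using 1
      · funext n
        simp [Vv, Matrix.vecHead, Matrix.vecTail]
        try push_cast
        try ring
      · simp [Gv, h5, Matrix.vecHead, Matrix.vecTail]
        try ring
    · convert (hasSum_zero : HasSum (fun _ : ℕ => (0:ℝ)) 0) using 1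
      · funext n
        simp [Vv, Matrix.vecHead, Matrix.vecTail]
      · simp [Gv, h5, Matrix.vecHead, Matrix.vecTail]
    · convert (hsD (u 5) (-(α 0 * u 0 + α 3 * u 3))).add (hsE (u 5) (α 3 * u 0 * u 1)) using 1
      · funext n
        simp [Vv, Matrix.vecHead, Matrix.vecTail]
        try push_cast
        try ring
      · simp [Gv, h5, Matrix.vecHead, Matrix.vecTail]
        try ring
    · convert hsD (u 6) (-(α 2 * u 2)) using 1
      · funext n
        simp [Vv, Matrix.vecHead, Matrix.vecTail]
        try push_cast
        try ring
      · simp [Gv, h5, Matrix.vecHead, Matrix.vecTail]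
        try ring
  have := h4.unique hT
  exact sub_left_inj.mp this


end G2Aux

/-- If `F ∈ 𝔊₂*` has coordinates `(α₁,…,α₅,α,β)` with `α₃α₄ ≠ 0` and `α₅ = 0`, then
`Ω_F(𝔊₂) = {(x₁*,…,x₅*,x*,y*) : x₅* = 0, α₃x₃* > 0, α₄x₄* > 0}`. -/
theorem omega_G2_hyperplane (α : Fin 7 → ℝ) (h34 : α 2 * α 3 ≠ 0) (h5 : α 4 = 0) :
    OmegaG2 α = {g : Fin 7 → ℝ | g 4 = 0 ∧ α 2 * g 2 > 0 ∧ α 3 * g 3 > 0} := by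
  obtain ⟨hα2, hα3⟩ := mul_ne_zero_iff.mp h34
  ext g
  simp only [OmegaG2, Set.mem_setOf_eq]
  constructor
  · rintro ⟨u, rfl⟩
    rw [G2Aux.key α u h5]
    refine ⟨by simp [G2Aux.Gv, Matrix.vecHead, Matrix.vecTail], ?_, ?_⟩
    · have h : (G2Aux.Gv α u) 2 = α 2 * Real.exp (u 6) := by
        simp [G2Aux.Gv, Matrix.vecHead, Matrix.vecTail]
      rw [h, ← mul_assoc]
      exact mul_pos (mul_self_pos.mpr hα2) (Real.exp_pos _)
    · have h : (G2Aux.Gv α u) 3 = α 3 * Real.exp (u 5) := by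
        simp [G2Aux.Gv, Matrix.vecHead, Matrix.vecTail]
      rw [h, ← mul_assoc]
      exact mul_pos (mul_self_pos.mpr hα3) (Real.exp_pos _)
  · rintro ⟨hg4, hg2, hg3⟩
    have h3pos : 0 < g 3 / α 3 := by
      rcases lt_or_gt_of_ne hα3 with h3 | h3
      · have hgg : g 3 < 0 := by nlinarith
        exact div_pos_of_neg_of_neg hgg h3
      · have hgg : 0 < g 3 := by nlinarith
        exact div_pos hgg h3
    have h2pos : 0 < g 2 / α 2 := by
      rcases lt_or_gt_of_ne hα2 with h2 | h2
      · have hgg : g 2 < 0 := by nlinarith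
        exact div_pos_of_neg_of_neg hgg h2
      · have hgg : 0 < g 2 := by nlinarith
        exact div_pos hgg h2
    set s := Real.log (g 3 / α 3) with hsdef
    set t := Real.log (g 2 / α 2) with htdef
    have hes : Real.exp s = g 3 / α 3 := Real.exp_log h3pos
    have het : Real.exp t = g 2 / α 2 := Real.exp_log h2pos
    have hphis := G2Aux.phi_ne_zero s
    have hphit := G2Aux.phi_ne_zero t
    set a := (g 1 - α 1) / (α 3 * G2Aux.phi s) with ha
    set b := (α 0 - g 0 / Real.exp s) / α 3 with hb
    set c := (α 6 - g 6) / (α 2 * G2Aux.phi t) with hc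
    set d := (α 5 - g 5 - α 0 * a * G2Aux.phi s + α 3 * a * b * G2Aux.psi s) /
      (α 3 * G2Aux.phi s) with hd
    refine ⟨![a, b, c, d, 0, s, t], ?_⟩
    rw [G2Aux.key α _ h5]
    funext j
    fin_cases j
    · have h : (G2Aux.Gv α ![a, b, c, d, 0, s, t]) 0 = (α 0 - α 3 * b) * Real.exp s := by
        simp [G2Aux.Gv, Matrix.vecHead, Matrix.vecTail]
      rw [show (⟨0, by norm_num⟩ : Fin 7) = (0 : Fin 7) from rfl, h, hb]
      field_simp
      ring
    · have h : (G2Aux.Gv α ![a, b, c, d, 0, s, t]) 1 = α 1 + α 3 * a * G2Aux.phi s := by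
        simp [G2Aux.Gv, Matrix.vecHead, Matrix.vecTail]
      rw [show (⟨1, by norm_num⟩ : Fin 7) = (1 : Fin 7) from rfl, h, ha]
      field_simp
      ring
    · have h : (G2Aux.Gv α ![a, b, c, d, 0, s, t]) 2 = α 2 * Real.exp t := by
        simp [G2Aux.Gv, Matrix.vecHead, Matrix.vecTail]
      rw [show (⟨2, by norm_num⟩ : Fin 7) = (2 : Fin 7) from rfl, h, het]
      field_simp
      try ring
    · have h : (G2Aux.Gv α ![a, b, c, d, 0, s, t]) 3 = α 3 * Real.exp s := by
        simp [G2Aux.Gv, Matrix.vecHead, Matrix.vecTail]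
      rw [show (⟨3, by norm_num⟩ : Fin 7) = (3 : Fin 7) from rfl, h, hes]
      field_simp
      try ring
    · have h : (G2Aux.Gv α ![a, b, c, d, 0, s, t]) 4 = 0 := by
        simp [G2Aux.Gv, Matrix.vecHead, Matrix.vecTail]
      rw [show (⟨4, by norm_num⟩ : Fin 7) = (4 : Fin 7) from rfl, h]
      exact hg4
    · have h : (G2Aux.Gv α ![a, b, c, d, 0, s, t]) 5 =
          α 5 - (α 0 * a + α 3 * d) * G2Aux.phi s + α 3 * a * b * G2Aux.psi s := by
        simp [G2Aux.Gv, Matrix.vecHead, Matrix.vecTail]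
        try ring
      rw [show (⟨5, by norm_num⟩ : Fin 7) = (5 : Fin 7) from rfl, h, hd]
      have hne : α 3 * G2Aux.phi s ≠ 0 := mul_ne_zero hα3 hphis
      field_simp
      ring
    · have h : (G2Aux.Gv α ![a, b, c, d, 0, s, t]) 6 = α 6 - α 2 * c * G2Aux.phi t := by
        simp [G2Aux.Gv, Matrix.vecHead, Matrix.vecTail]
      rw [show (⟨6, by norm_num⟩ : Fin 7) = (6 : Fin 7) from rfl, h, hc]
      field_simp
      ring

end
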